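/- arXiv:1108.3622 — 3 statements merged into one kernel-verified Lean document; each statement's English description precedes it below -/
import Mathlib

section
/- There is no infinite binary word that avoids the pattern α θ(α) α for all antimorphic involutions θ on {a,b}*. That is, every infinite word w over {a,b} has a factor of the form u θ(u) u for some nonempty word u and some antimorphic involution θ. -/
/-- `v` is a factor of the infinite word `w`. -/
def FactorOf {α : Type*} (v : List α) (w : ℕ → α) : Prop :=
  ∃ i : ℕ, v = (List.range v.length).map fun j => w (i + j)

lemma fin2_ne_add_one {x y : Fin 2} (h : x ≠ y) : y = x + 1 := by
  fin_cases x <;> fin_cases y <;> simp_all <;> rfl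

lemma fin2_add_add (x c : Fin 2) : x + c + c = x := by
  fin_cases x <;> fin_cases c <;> rfl

lemma fin2_self_add (x y : Fin 2) : x + x + y = y := by
  fin_cases x <;> fin_cases y <;> rfl

/-- No infinite binary word avoids `α θ(α) α` for all antimorphic involutions:
every `w : ℕ → Fin 2` has a factor `u ++ θ(u) ++ u` for some nonempty `u`
and some antimorphic involution `θ` (a letter involution `g` composed with
reversal). -/
theorem binary_contains_a_ta_a_antimorphic (w : ℕ → Fin 2) :
    ∃ u : List (Fin 2), u ≠ [] ∧ ∃ g : Fin 2 → Fin 2, (∀ z, g (g z) = z) ∧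
      FactorOf (u ++ (u.map g).reverse ++ u) w := by
  by_cases h : ∃ i, w (i + 2) = w i
  · obtain ⟨i, hi⟩ := h
    refine ⟨[w i], by simp, fun z => z + (w i + w (i + 1)), fun z => ?_, i, ?_⟩
    · show z + (w i + w (i + 1)) + (w i + w (i + 1)) = z
      exact fin2_add_add z _
    · simp [List.range_succ]
      exact ⟨by rw [← add_assoc]; exact fin2_self_add _ _, hi.symm⟩
  · push_neg at h
    -- w (i+2) = w i + 1 for all i
    have hstep : ∀ i, w (i + 2) = w i + 1 := fun i => fin2_ne_add_one (fun e => h i e.symm)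
    obtain ⟨i, hne⟩ : ∃ i, w (i + 1) ≠ w i := by
      by_cases h01 : w 1 = w 0
      · exact ⟨1, by rw [show (1:ℕ)+1 = 0+2 from rfl, hstep 0, h01]
                     intro e; exact absurd (fin2_add_add (w 0) 1 ▸ congrArg (· + 1) e)
                       (by simpa using h 0)⟩
      · exact ⟨0, by simpa using h01⟩
    have h1 : w (i + 1) = w i + 1 := fin2_ne_add_one (Ne.symm hne)
    refine ⟨[w i, w (i + 1)], by simp, id, fun z => rfl, i, ?_⟩
    have e2 : w (i + 2) = w (i + 1) := by rw [hstep i, h1]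
    have e3 : w (i + 3) = w i := by
      rw [show i + 3 = (i+1) + 2 from by ring, hstep, h1, fin2_add_add]
    have e4 : w (i + 4) = w i := by
      rw [show i + 4 = (i+2) + 2 from by ring, hstep, e2, h1, fin2_add_add]
    have e5 : w (i + 5) = w (i + 1) := by
      rw [show i + 5 = (i+3) + 2 from by ring, hstep, e3, h1]
    simp [List.range_succ, e2, e3, e4, e5]
end

section
/- Let w be the infinite word over {a,b,c} obtained from the Thue–Morse word by replacing each a' by aacb and each b' by accb. Then for every morphic involution θ on {a,b,c}* and every nonempty word u, the word u θ(u) u is not a factor of w. Hence the morphic θ-avoidance index of α θ(α) α equals 3. -/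
section Aux

/-! ### Thue–Morse facts -/

variable {t : ℕ → Bool}

lemma tm_succ (hfix : ∀ n : ℕ, t (2 * n) = t n ∧ t (2 * n + 1) = !(t n))
    (n : ℕ) (h : n % 2 = 0) : t (n + 1) = !(t n) := by
  obtain ⟨k, rfl⟩ : ∃ k, n = 2 * k := ⟨n / 2, by omega⟩
  rw [(hfix k).2, (hfix k).1]

lemma tm_no3 (hfix : ∀ n : ℕ, t (2 * n) = t n ∧ t (2 * n + 1) = !(t n))
    (n : ℕ) : ¬(t n = t (n + 1) ∧ t (n + 1) = t (n + 2)) := by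
  rintro ⟨h1, h2⟩
  rcases Nat.even_or_odd n with ⟨k, hk⟩ | ⟨k, hk⟩
  · rw [tm_succ hfix n (by omega)] at h1
    simp at h1
  · rw [show n + 2 = (n+1) + 1 by ring, tm_succ hfix (n+1) (by omega)] at h2
    simp at h2

lemma tm_no_overlap (hfix : ∀ n : ℕ, t (2 * n) = t n ∧ t (2 * n + 1) = !(t n)) :
    ∀ m : ℕ, 1 ≤ m → ∀ q : ℕ, ¬(∀ k ≤ m, t (q + k) = t (q + k + m)) := by
  intro m
  induction m using Nat.strong_induction_on with
  | _ m IH =>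
  intro hm q H
  rcases Nat.even_or_odd m with ⟨j, hj⟩ | ⟨d, hd⟩
  · -- m = 2j even
    have hj1 : 1 ≤ j := by omega
    rcases Nat.even_or_odd q with ⟨r0, hr0⟩ | ⟨r0, hr0⟩
    · refine IH j (by omega) hj1 r0 ?_
      intro k hk
      have h := H (2 * k) (by omega)
      rw [show q + 2 * k + m = 2 * (r0 + k + j) by omega,
          show q + 2 * k = 2 * (r0 + k) by omega,
          (hfix _).1, (hfix _).1] at h
      exact h
    · refine IH j (by omega) hj1 r0 ?_
      intro k hk
      have h := H (2 * k) (by omega)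
      rw [show q + 2 * k + m = 2 * (r0 + k + j) + 1 by omega,
          show q + 2 * k = 2 * (r0 + k) + 1 by omega,
          (hfix _).2, (hfix _).2] at h
      simpa using h
  · -- m = 2d + 1 odd
    rcases Nat.eq_zero_or_pos d with rfl | hd1
    · obtain rfl : m = 1 := by omega
      refine tm_no3 hfix q ⟨?_, ?_⟩
      · simpa using H 0 (by omega)
      · have := H 1 (by omega)
        rwa [show q + 1 + 1 = q + 2 by ring] at this
    rcases Nat.even_or_odd q with ⟨r0, hr0⟩ | ⟨r0, hr0⟩
    · -- q even: derive t (r0+d+s) = t (r0+d+s+1) for s ≤ d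
      have key : ∀ s ≤ d, t (r0 + d + s) = t (r0 + d + s + 1) := by
        intro s hs
        have hE := H (2 * s) (by omega)
        rw [show q + 2 * s + m = 2 * (r0 + s + d) + 1 by omega,
            show q + 2 * s = 2 * (r0 + s) by omega,
            (hfix _).1, (hfix _).2] at hE
        have hO := H (2 * s + 1) (by omega)
        rw [show q + (2 * s + 1) + m = 2 * (r0 + s + d + 1) by omega,
            show q + (2 * s + 1) = 2 * (r0 + s) + 1 by omega,
            (hfix _).2, (hfix _).1] at hO
        -- hE : t (r0+s) = !t (r0+s+d),  hO : !t (r0+s) = t (r0+s+d+1)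
        have : t (r0 + s + d) = t (r0 + s + d + 1) := by
          rw [← hO, hE, Bool.not_not]
        rw [show r0 + d + s = r0 + s + d by ring]
        exact this
      exact tm_no3 hfix (r0 + d) ⟨by simpa using key 0 (by omega),
        by simpa [show r0 + d + 1 + 1 = r0 + d + 2 by ring,
          show r0 + d + 1 = r0 + d + 1 by rfl] using key 1 hd1⟩
    · -- q odd: derive t (r0+s) = t (r0+s+1) for s ≤ d
      have key : ∀ s ≤ d, t (r0 + s) = t (r0 + s + 1) := by
        intro s hs
        have hA := H (2 * s) (by omega)
        rw [show q + 2 * s + m = 2 * (r0 + s + d + 1) by omega,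
            show q + 2 * s = 2 * (r0 + s) + 1 by omega,
            (hfix _).2, (hfix _).1] at hA
        have hB := H (2 * s + 1) (by omega)
        rw [show q + (2 * s + 1) + m = 2 * (r0 + s + d + 1) + 1 by omega,
            show q + (2 * s + 1) = 2 * (r0 + s + 1) by omega,
            (hfix _).1, (hfix _).2] at hB
        -- hA : !t (r0+s) = t (r0+s+d+1),  hB : t (r0+s+1) = !t (r0+s+d+1)
        rw [hB, ← hA, Bool.not_not]
      exact tm_no3 hfix r0 ⟨key 0 (by omega),
        by simpa [show r0 + 1 + 1 = r0 + 2 by ring] using key 1 hd1⟩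

/-! ### Extracting/building factors of shape `u (g u) u` -/

lemma three_of_factor {α : Type*} (w : ℕ → α) (g : α → α) (u : List α)
    (h : FactorOf (u ++ u.map g ++ u) w) :
    ∃ i : ℕ, (∀ j < u.length, w (i + 2 * u.length + j) = w (i + j)) ∧
      (∀ j < u.length, w (i + u.length + j) = g (w (i + j))) := by
  obtain ⟨i, hv⟩ := h
  set L := u.length with hLdef
  have hlen : (u ++ u.map g ++ u).length = 3 * L := by simp [hLdef]; ring
  have hpt : ∀ j < 3 * L, (u ++ u.map g ++ u)[j]? = some (w (i + j)) := by
    intro j hj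
    rw [hv]
    rw [List.getElem?_map, List.getElem?_range (by omega : j < (u ++ u.map g ++ u).length)]
    rfl
  have huL : (u.map g).length = L := by simp [hLdef]
  have k1 : ∀ j < L, u[j]? = some (w (i + j)) := by
    intro j hj
    have := hpt j (by omega)
    rwa [List.append_assoc, List.getElem?_append_left (by omega : j < u.length)] at this
  have k3 : ∀ j < L, u[j]? = some (w (i + 2 * L + j)) := by
    intro j hj
    have := hpt (2 * L + j) (by omega)
    rw [show i + (2 * L + j) = i + 2 * L + j by ring] at this
    rwa [List.getElem?_append_right (by simp [hLdef]; omega),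
      show 2 * L + j - (u ++ u.map g).length = j by simp [hLdef]; omega] at this
  have k2 : ∀ j < L, (u.map g)[j]? = some (w (i + L + j)) := by
    intro j hj
    have := hpt (L + j) (by omega)
    rw [show i + (L + j) = i + L + j by ring] at this
    rwa [List.append_assoc, List.getElem?_append_right (by omega : u.length ≤ L + j),
      List.getElem?_append_left (by omega : L + j - u.length < (u.map g).length),
      show L + j - u.length = j by omega] at this
  refine ⟨i, fun j hj => ?_, fun j hj => ?_⟩
  · have := (k1 j hj).symm.trans (k3 j hj)
    exact (Option.some_injective _ this).symm
  · have := k2 j hj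
    rw [List.getElem?_map, k1 j hj] at this
    exact (Option.some_injective _ this).symm

lemma factor_of_three {α : Type*} (w : ℕ → α) (g : α → α) (i L : ℕ) (hL : 1 ≤ L)
    (h1 : ∀ j < L, w (i + 2 * L + j) = w (i + j))
    (h2 : ∀ j < L, w (i + L + j) = g (w (i + j))) :
    ∃ u : List α, u ≠ [] ∧ FactorOf (u ++ u.map g ++ u) w := by
  set u : List α := (List.range L).map fun j => w (i + j) with hu
  have hul : u.length = L := by simp [hu]
  refine ⟨u, by simp [hu]; omega, i, ?_⟩
  have hlen : (u ++ u.map g ++ u).length = 3 * L := by simp [hu]; ring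
  refine List.ext_getElem? fun n => ?_
  rw [List.getElem?_map]
  by_cases hn : n < 3 * L
  · rw [List.getElem?_range (by omega : n < (u ++ u.map g ++ u).length)]
    by_cases c1 : n < L
    · rw [List.append_assoc, List.getElem?_append_left (by omega : n < u.length)]
      simp [hu, List.getElem?_range, c1]
    · by_cases c2 : n < 2 * L
      · rw [List.append_assoc, List.getElem?_append_right (by omega : u.length ≤ n),
          List.getElem?_append_left (by simp [hu]; omega), hul]
        have hr : (List.range L)[n - L]? = some (n - L) := List.getElem?_range (by omega)
        simp only [hu, List.map_map, List.getElem?_map, hr, Option.map_some, Function.comp]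
        rw [← h2 (n - L) (by omega), show i + L + (n - L) = i + n by omega]
      · rw [List.getElem?_append_right (by simp [hu]; omega),
          show n - (u ++ u.map g).length = n - 2 * L by simp [hu]; omega]
        have hr : (List.range L)[n - 2 * L]? = some (n - 2 * L) := List.getElem?_range (by omega)
        simp only [hu, List.getElem?_map, hr, Option.map_some]
        rw [← h1 (n - 2 * L) (by omega), show i + 2 * L + (n - 2 * L) = i + n by omega]
  · rw [List.getElem?_eq_none (by omega), List.getElem?_eq_none (by simp; omega)]
    rfl

end Aux

/-! ### The word `w` avoids `u (g u) u` -/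

lemma w_avoid (t : ℕ → Bool)
    (hfix : ∀ n : ℕ, t (2 * n) = t n ∧ t (2 * n + 1) = !(t n))
    (w : ℕ → Fin 3)
    (hw : ∀ n : ℕ, w n =
      (if t (n / 4) then ([0, 2, 2, 1] : List (Fin 3))
       else ([0, 0, 2, 1] : List (Fin 3))).getD (n % 4) 0) :
    ∀ g : Fin 3 → Fin 3, (∀ z, g (g z) = z) →
      ∀ u : List (Fin 3), u ≠ [] → ¬ FactorOf (u ++ u.map g ++ u) w := by
  intro g hg u hu hf
  obtain ⟨i, K1, K2⟩ := three_of_factor w g u hf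
  set L := u.length with hLdef
  have hL : 1 ≤ L := by
    rcases u with _ | ⟨x, v⟩
    · exact absurd rfl hu
    · simp [hLdef]
  have hw0 : ∀ n, n % 4 = 0 → w n = 0 := fun n h => by rw [hw n, h]; split <;> rfl
  have hw1 : ∀ n, n % 4 = 1 → w n = if t (n / 4) then 2 else 0 := fun n h => by
    rw [hw n, h]; split <;> rfl
  have hw2 : ∀ n, n % 4 = 2 → w n = 2 := fun n h => by rw [hw n, h]; split <;> rfl
  have hw3 : ∀ n, n % 4 = 3 → w n = 1 := fun n h => by rw [hw n, h]; split <;> rfl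
  have hw1' : ∀ n, n % 4 = 1 → w n ≠ 1 := fun n h => by
    rw [hw1 n h]; split <;> decide
  have hcase : L % 2 = 1 ∨ L % 4 = 2 ∨ L % 4 = 0 := by omega
  rcases hcase with hc | hc | hc
  · -- L odd : compare first letters of first and third copies
    have e := K1 0 (by omega)
    simp only [Nat.add_zero] at e
    have h4 : i % 4 = 0 ∨ i % 4 = 1 ∨ i % 4 = 2 ∨ i % 4 = 3 := by omega
    rcases h4 with h | h | h | h
    · rw [hw0 i h, hw2 (i + 2 * L) (by omega)] at e
      exact absurd e (by decide)
    · exact hw1' i h (by rw [← e, hw3 (i + 2 * L) (by omega)])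
    · rw [hw2 i h, hw0 (i + 2 * L) (by omega)] at e
      exact absurd e (by decide)
    · exact hw1' (i + 2 * L) (by omega) (by rw [e, hw3 i h])
  · -- L ≡ 2 (mod 4) : compare first two letters of first and middle copies
    have e0 := K2 0 (by omega)
    simp only [Nat.add_zero] at e0
    have e1 := K2 1 (by omega)
    have h4 : i % 4 = 0 ∨ i % 4 = 1 ∨ i % 4 = 2 ∨ i % 4 = 3 := by omega
    rcases h4 with h | h | h | h
    · rw [hw0 i h, hw2 (i + L) (by omega)] at e0
      -- e0 : 2 = g 0
      rw [hw3 (i + L + 1) (by omega)] at e1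
      -- e1 : 1 = g (w (i+1))
      have hx : w (i + 1) = 2 ∨ w (i + 1) = 0 := by
        rw [hw1 (i + 1) (by omega)]; split <;> simp
      rcases hx with hx | hx <;> rw [hx] at e1
      · -- g 2 = 1, g 0 = 2
        have h2 := hg 0
        rw [← e0, ← e1] at h2
        exact absurd h2 (by decide)
      · rw [← e0] at e1
        exact absurd e1 (by decide)
    · rw [hw3 (i + L) (by omega)] at e0
      -- e0 : 1 = g (w i)
      rw [hw2 (i + 1) (by omega), hw0 (i + L + 1) (by omega)] at e1
      -- e1 : 0 = g 2
      have hx : w i = 2 ∨ w i = 0 := by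
        rw [hw1 i h]; split <;> simp
      rcases hx with hx | hx <;> rw [hx] at e0
      · rw [← e1] at e0
        exact absurd e0 (by decide)
      · -- g 0 = 1, g 2 = 0
        have h2 := hg 2
        rw [← e1, ← e0] at h2
        exact absurd h2 (by decide)
    · rw [hw2 i h, hw0 (i + L) (by omega)] at e0
      -- e0 : 0 = g 2
      rw [hw3 (i + 1) (by omega)] at e1
      -- e1 : w (i+L+1) = g 1
      have hx : w (i + L + 1) = 2 ∨ w (i + L + 1) = 0 := by
        rw [hw1 (i + L + 1) (by omega)]; split <;> simp
      rcases hx with hx | hx <;> rw [hx] at e1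
      · -- g 1 = 2, g 2 = 0
        have h2 := hg 1
        rw [← e1, ← e0] at h2
        exact absurd h2 (by decide)
      · -- g 1 = 0, g 2 = 0 : apply g and use involution
        have h2 := hg 1
        have h3 := hg 2
        rw [← e1] at h2
        rw [← e0] at h3
        rw [h3] at h2
        exact absurd h2 (by decide)
    · rw [hw3 i h] at e0
      -- e0 : w (i+L) = g 1
      rw [hw0 (i + 1) (by omega), hw2 (i + L + 1) (by omega)] at e1
      -- e1 : 2 = g 0
      have hx : w (i + L) = 2 ∨ w (i + L) = 0 := by
        rw [hw1 (i + L) (by omega)]; split <;> simp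
      rcases hx with hx | hx <;> rw [hx] at e0
      · -- g 1 = 2, g 0 = 2
        have h2 := hg 1
        have h3 := hg 0
        rw [← e0] at h2
        rw [← e1] at h3
        rw [h3] at h2
        exact absurd h2 (by decide)
      · -- g 1 = 0, g 0 = 2
        have h2 := hg 1
        rw [← e0, ← e1] at h2
        exact absurd h2 (by decide)
  · -- L ≡ 0 (mod 4) : g must be the identity, then a cube in Thue–Morse
    have hL4 : 4 ≤ L := by omega
    obtain ⟨j0, hj0l, hj0⟩ : ∃ j, j < 4 ∧ (i + j) % 4 = 0 := ⟨(4 - i % 4) % 4, by omega, by omega⟩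
    obtain ⟨j2, hj2l, hj2⟩ : ∃ j, j < 4 ∧ (i + j) % 4 = 2 := ⟨(6 - i % 4) % 4, by omega, by omega⟩
    obtain ⟨j3, hj3l, hj3⟩ : ∃ j, j < 4 ∧ (i + j) % 4 = 3 := ⟨(7 - i % 4) % 4, by omega, by omega⟩
    have hg0 : g 0 = 0 := by
      have e := K2 j0 (by omega)
      rw [hw0 (i + j0) hj0, hw0 (i + L + j0) (by omega)] at e
      exact e.symm
    have hg2 : g 2 = 2 := by
      have e := K2 j2 (by omega)
      rw [hw2 (i + j2) hj2, hw2 (i + L + j2) (by omega)] at e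
      exact e.symm
    have hg1 : g 1 = 1 := by
      have e := K2 j3 (by omega)
      rw [hw3 (i + j3) hj3, hw3 (i + L + j3) (by omega)] at e
      exact e.symm
    have gid : ∀ x : Fin 3, g x = x := by
      intro x
      fin_cases x
      · exact hg0
      · exact hg1
      · exact hg2
    have step : ∀ j, j < 2 * L → w (i + j) = w (i + j + L) := by
      intro j hj
      by_cases cj : j < L
      · have e := K2 j cj
        rw [gid] at e
        rw [show i + j + L = i + L + j by ring]
        exact e.symm
      · have hj' : j - L < L := by omega
        have e2 := K2 (j - L) hj'
        rw [gid] at e2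
        have e1 := K1 (j - L) hj'
        rw [show i + j + L = i + 2 * L + (j - L) by omega, show i + j = i + L + (j - L) by omega,
          e2, e1]
    set m := L / 4 with hm
    have hLm : L = 4 * m := by omega
    have hm1 : 1 ≤ m := by omega
    set q0 := (i + 2) / 4 with hq0
    refine tm_no_overlap hfix m hm1 q0 fun k hk => ?_
    set n := 4 * (q0 + k) + 1 with hn
    have hs := step (n - i) (by omega)
    rw [show i + (n - i) + L = n + L by omega, show i + (n - i) = n by omega] at hs
    rw [hw1 n (by omega), hw1 (n + L) (by omega)] at hs
    rw [show n / 4 = q0 + k by omega, show (n + L) / 4 = q0 + k + m by omega] at hs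
    cases h1 : t (q0 + k) <;> cases h2 : t (q0 + k + m) <;> rw [h1, h2] at hs <;>
      revert hs <;> decide

/-! ### No binary word works -/

lemma binary6 : ∀ f : Fin 6 → Fin 2, ∃ i L : Fin 6, 1 ≤ (L : ℕ) ∧ (i : ℕ) + 3 * (L : ℕ) ≤ 6 ∧
    (((∀ j < (L : ℕ), f ⟨((i : ℕ) + 2 * (L : ℕ) + j) % 6, Nat.mod_lt _ (by norm_num)⟩ =
        f ⟨((i : ℕ) + j) % 6, Nat.mod_lt _ (by norm_num)⟩) ∧
      (∀ j < (L : ℕ), f ⟨((i : ℕ) + (L : ℕ) + j) % 6, Nat.mod_lt _ (by norm_num)⟩ =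
        id (f ⟨((i : ℕ) + j) % 6, Nat.mod_lt _ (by norm_num)⟩))) ∨
     ((∀ j < (L : ℕ), f ⟨((i : ℕ) + 2 * (L : ℕ) + j) % 6, Nat.mod_lt _ (by norm_num)⟩ =
        f ⟨((i : ℕ) + j) % 6, Nat.mod_lt _ (by norm_num)⟩) ∧
      (∀ j < (L : ℕ), f ⟨((i : ℕ) + (L : ℕ) + j) % 6, Nat.mod_lt _ (by norm_num)⟩ =
        f ⟨((i : ℕ) + j) % 6, Nat.mod_lt _ (by norm_num)⟩ + 1))) := by
  decide

/-- Letters: `a = 0`, `b = 1`, `c = 2` in `Fin 3`.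
Let `t` be the Thue–Morse word (fixed point of `a' ↦ a'b'`, `b' ↦ b'a'`,
starting with `a' = false`) and let `w` be its image under `a' ↦ aacb`,
`b' ↦ accb`.  Then for every morphic involution `θ` on `{a,b,c}*` (induced by
a letter involution `g`) and every nonempty `u`, the word `u θ(u) u` is not a
factor of `w`; hence the morphic θ-avoidance index of `α θ(α) α` equals `3`. -/
theorem morphic_index_a_ta_a_eq_three (t : ℕ → Bool)
    (h0 : t 0 = false)
    (hfix : ∀ n : ℕ, t (2 * n) = t n ∧ t (2 * n + 1) = !(t n))
    (w : ℕ → Fin 3)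
    (hw : ∀ n : ℕ, w n =
      (if t (n / 4) then ([0, 2, 2, 1] : List (Fin 3))
       else ([0, 0, 2, 1] : List (Fin 3))).getD (n % 4) 0) :
    (∀ g : Fin 3 → Fin 3, (∀ z, g (g z) = z) →
      ∀ u : List (Fin 3), u ≠ [] → ¬ FactorOf (u ++ u.map g ++ u) w) ∧
    IsLeast {k : ℕ | ∃ w' : ℕ → Fin k,
      ∀ g : Fin k → Fin k, (∀ z, g (g z) = z) →
        ∀ u : List (Fin k), u ≠ [] → ¬ FactorOf (u ++ u.map g ++ u) w'} 3 := by
  refine ⟨w_avoid t hfix w hw, ⟨w, w_avoid t hfix w hw⟩, ?_⟩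
  intro k hk
  by_contra hlt
  push_neg at hlt
  interval_cases k
  · obtain ⟨w', h⟩ := hk
    exact (w' 0).elim0
  · obtain ⟨w', h⟩ := hk
    have h1 : w' 1 = w' 0 := Subsingleton.elim _ _
    have h2 : w' 2 = w' 0 := Subsingleton.elim _ _
    refine h id (fun z => rfl) [w' 0] (by simp) ⟨0, ?_⟩
    simp [List.range_succ, h1, h2]
  · obtain ⟨w', h⟩ := hk
    obtain ⟨i, L, hL1, hle, hp | hp⟩ := binary6 fun j : Fin 6 => w' (j : ℕ)
    · have h1 : ∀ j < (L : ℕ), w' ((i : ℕ) + 2 * (L : ℕ) + j) = w' ((i : ℕ) + j) := by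
        intro j hj
        have := hp.1 j hj
        simpa [Nat.mod_eq_of_lt (show (i : ℕ) + 2 * (L : ℕ) + j < 6 by omega),
          Nat.mod_eq_of_lt (show (i : ℕ) + j < 6 by omega)] using this
      have h2 : ∀ j < (L : ℕ), w' ((i : ℕ) + (L : ℕ) + j) = id (w' ((i : ℕ) + j)) := by
        intro j hj
        have := hp.2 j hj
        simpa [Nat.mod_eq_of_lt (show (i : ℕ) + (L : ℕ) + j < 6 by omega),
          Nat.mod_eq_of_lt (show (i : ℕ) + j < 6 by omega)] using this
      obtain ⟨u, hu, hf⟩ := factor_of_three w' id (i : ℕ) (L : ℕ) hL1 h1 h2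
      exact h id (fun z => rfl) u hu hf
    · have h1 : ∀ j < (L : ℕ), w' ((i : ℕ) + 2 * (L : ℕ) + j) = w' ((i : ℕ) + j) := by
        intro j hj
        have := hp.1 j hj
        simpa [Nat.mod_eq_of_lt (show (i : ℕ) + 2 * (L : ℕ) + j < 6 by omega),
          Nat.mod_eq_of_lt (show (i : ℕ) + j < 6 by omega)] using this
      have h2 : ∀ j < (L : ℕ), w' ((i : ℕ) + (L : ℕ) + j) =
          (fun z : Fin 2 => z + 1) (w' ((i : ℕ) + j)) := by
        intro j hj
        have := hp.2 j hj
        simpa [Nat.mod_eq_of_lt (show (i : ℕ) + (L : ℕ) + j < 6 by omega),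
          Nat.mod_eq_of_lt (show (i : ℕ) + j < 6 by omega)] using this
      obtain ⟨u, hu, hf⟩ := factor_of_three w' (fun z : Fin 2 => z + 1) (i : ℕ) (L : ℕ) hL1 h1 h2
      exact h (fun z : Fin 2 => z + 1) (by decide) u hu hf
end

section
/- The morphic and antimorphic θ-avoidance indices of α α θ(α) are both exactly 3: there is an infinite word over a 3-letter alphabet avoiding the ordinary pattern ααβ (hence avoiding α α θ(α) for all involutions), and no binary word avoids α α θ(α) for all morphic (resp. antimorphic) involutions. -/
def tm : ℕ → Bool
  | 0 => false
  | 1 => true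
  | (n+2) => if (n+2) % 2 = 0 then tm ((n+2)/2) else !tm ((n+2)/2)
decreasing_by all_goals omega

lemma tm_even (n : ℕ) : tm (2*n) = tm n := by
  match n with
  | 0 => rfl
  | (m+1) =>
    have h : 2*(m+1) = (2*m) + 2 := by ring
    have h2 : (2*m+2) % 2 = 0 := by omega
    have h3 : (2*m+2)/2 = m+1 := by omega
    rw [h, tm, if_pos h2, h3]

lemma tm_odd (n : ℕ) : tm (2*n+1) = !tm n := by
  match n with
  | 0 => simp [tm]
  | (m+1) =>
    have h : 2*(m+1)+1 = (2*m+1) + 2 := by ring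
    have h2 : ¬ ((2*m+1+2) % 2 = 0) := by omega
    have h3 : (2*m+1+2)/2 = m+1 := by omega
    rw [h, tm, if_neg h2, h3]

lemma tm_pair (n : ℕ) : tm (2*n) ≠ tm (2*n+1) := by
  rw [tm_even, tm_odd]; cases tm n <;> simp

lemma no_three (n : ℕ) (h1 : tm n = tm (n+1)) (h2 : tm (n+1) = tm (n+2)) : False := by
  rcases Nat.even_or_odd n with ⟨m, hm⟩ | ⟨m, hm⟩
  · apply tm_pair m
    convert h1 using 2 <;> omega
  · apply tm_pair (m+1)
    convert h2 using 2 <;> omega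

lemma step2 (k : ℕ) (h1 : tm (2*k+1) ≠ tm (2*k+2)) (h2 : tm (2*k+3) ≠ tm (2*k+4)) : False := by
  rw [tm_odd, show 2*k+2 = 2*(k+1) by ring, tm_even] at h1
  rw [show 2*k+3 = 2*(k+1)+1 by ring, tm_odd, show 2*k+4 = 2*(k+2) by ring, tm_even] at h2
  apply no_three k
  · cases hk : tm k <;> cases hk1 : tm (k+1) <;> simp_all
  · cases hk1 : tm (k+1) <;> cases hk2 : tm (k+2) <;> simp_all

theorem no_overlap : ∀ p, 0 < p → ∀ i, (∀ j, j ≤ p → tm (i+j) = tm (i+p+j)) → False := by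
  intro p
  induction p using Nat.strong_induction_on with
  | _ p IH =>
    intro hp i h
    rcases Nat.even_or_odd p with ⟨q, hq⟩ | ⟨q, hq⟩
    · -- p even, p = q + q
      have hq0 : 0 < q := by omega
      rcases Nat.even_or_odd i with ⟨m, hm⟩ | ⟨m, hm⟩
      · apply IH q (by omega) hq0 m
        intro j hj
        have hh := h (2*j) (by omega)
        rw [show i + 2*j = 2*(m+j) by omega, show i + p + 2*j = 2*(m+q+j) by omega,
          tm_even, tm_even] at hh
        exact hh
      · apply IH q (by omega) hq0 m
        intro j hj
        have hh := h (2*j) (by omega)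
        rw [show i + 2*j = 2*(m+j)+1 by omega, show i + p + 2*j = 2*(m+q+j)+1 by omega,
          tm_odd, tm_odd] at hh
        simpa using hh
    · -- p odd, p = 2q+1
      rcases Nat.eq_zero_or_pos q with hq0 | hq0
      · -- p = 1
        have e0 := h 0 (by omega)
        have e1 := h 1 (by omega)
        apply no_three i
        · convert e0 using 2 <;> omega
        · convert e1 using 2 <;> omega
      · -- q ≥ 1
        have alt1 : ∀ j, j < p → tm (i+j) ≠ tm (i+j+1) := by
          intro j hj heq
          have h1 := h j (le_of_lt hj)
          have h2 := h (j+1) hj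
          have heq2 : tm (i+p+j) = tm (i+p+j+1) := by
            rw [← h1, show i+p+j+1 = i+p+(j+1) by omega, ← h2,
              show i+(j+1) = i+j+1 by omega]
            exact heq
          rcases Nat.even_or_odd (i+j) with ⟨m, hm⟩ | ⟨m, hm⟩
          · apply tm_pair m
            convert heq using 2 <;> omega
          · apply tm_pair (m+q+1)
            convert heq2 using 2 <;> omega
        have alt : ∀ j, j + 1 < 2*p → tm (i+j) ≠ tm (i+j+1) := by
          intro j hj
          rcases Nat.lt_or_ge j p with hjp | hjp
          · exact alt1 j hjp
          · intro heq
            apply alt1 (j - p) (by omega)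
            have h1 := h (j-p) (by omega)
            have h2 := h (j-p+1) (by omega)
            rw [h1, show i+(j-p)+1 = i+(j-p+1) by omega, h2,
              show i+p+(j-p) = i+j by omega, show i+p+(j-p+1) = i+j+1 by omega]
            exact heq
        -- pick odd start
        rcases Nat.even_or_odd i with ⟨m, hm⟩ | ⟨m, hm⟩
        · -- i even: i+1 = 2m+1
          apply step2 m
          · have := alt 1 (by omega)
            convert this using 2 <;> omega
          · have := alt 3 (by omega)
            convert this using 2 <;> omega
        · -- i odd: i = 2m+1
          apply step2 m
          · have := alt 0 (by omega)
            convert this using 2 <;> omega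
          · have := alt 2 (by omega)
            convert this using 2 <;> omega

def w3 : ℕ → Fin 3 := fun n => if tm n = tm (n+1) then 1 else if tm n then 0 else 2

lemma w3_one {a : ℕ} : w3 a = 1 ↔ tm a = tm (a+1) := by
  unfold w3
  cases h1 : tm a <;> cases h2 : tm (a+1) <;> simp

lemma w3_key {a b : ℕ} (h : w3 a = w3 b) : (tm a = tm b) ↔ (tm (a+1) = tm (b+1)) := by
  unfold w3 at h
  cases h1 : tm a <;> cases h2 : tm (a+1) <;> cases h3 : tm b <;> cases h4 : tm (b+1) <;>
    simp_all

lemma w3_key2 {a b : ℕ} (h : w3 a = w3 b) (hne : ¬ tm a = tm (a+1)) : tm a = tm b := by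
  unfold w3 at h
  cases h1 : tm a <;> cases h2 : tm (a+1) <;> cases h3 : tm b <;> cases h4 : tm (b+1) <;>
    simp_all

lemma w3_squarefree (L i : ℕ) (hL : 0 < L) (h : ∀ j, j < L → w3 (i+j) = w3 (i+L+j)) :
    False := by
  have step : ∀ j, j < L → ((tm (i+j) = tm (i+L+j)) ↔ (tm (i+j+1) = tm (i+L+j+1))) :=
    fun j hj => w3_key (h j hj)
  have chain : ∀ j, j ≤ L → ((tm (i+j) = tm (i+L+j)) ↔ (tm i = tm (i+L))) := by
    intro j
    induction j with
    | zero => intro _; simp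
    | succ n ih =>
      intro hn
      rw [show i+(n+1) = i+n+1 by omega, show i+L+(n+1) = i+L+n+1 by omega,
        ← step n (by omega)]
      exact ih (by omega)
  by_cases hall : ∀ j, j < L → tm (i+j) = tm (i+j+1)
  · have hall2 : ∀ j, j < L → tm (i+L+j) = tm (i+L+j+1) := by
      intro j hj
      exact w3_one.mp ((h j hj) ▸ w3_one.mpr (hall j hj))
    rcases Nat.lt_or_ge 1 L with h2 | h2
    · apply no_three i (by simpa using hall 0 hL)
      have := hall 1 h2
      convert this using 2 <;> omega
    · have hL1 : L = 1 := by omega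
      apply no_three i (by simpa using hall 0 hL)
      have := hall2 0 hL
      rw [hL1] at this
      convert this using 2 <;> omega
  · push_neg at hall
    obtain ⟨j0, hj0, hne⟩ := hall
    have base : tm (i+j0) = tm (i+L+j0) := w3_key2 (h j0 hj0) hne
    have base0 : tm i = tm (i+L) := (chain j0 (le_of_lt hj0)).mp base
    exact no_overlap L hL i (fun j hj => (chain j hj).mpr base0)


lemma w3_avoid (u x : List (Fin 3)) (hu : u ≠ []) : ¬ FactorOf (u ++ u ++ x) w3 := by
  rintro ⟨i, hi⟩
  set L := u.length with hLdef
  have hL : 0 < L := List.length_pos_iff.mpr hu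
  apply w3_squarefree L i hL
  intro j hj
  have hlen : (u ++ u ++ x).length = L + L + x.length := by simp; omega
  have hv : ∀ n, n < (u ++ u ++ x).length → (u ++ u ++ x)[n]? = some (w3 (i + n)) := by
    intro n hn
    conv_lhs => rw [hi]
    rw [List.getElem?_map, List.getElem?_range (by simpa using hn)]
    rfl
  have e1 : (u ++ u ++ x)[j]? = u[j]? := by
    rw [List.append_assoc, List.getElem?_append, if_pos (show j < u.length by omega)]
  have e2 : (u ++ u ++ x)[L + j]? = u[j]? := by
    rw [List.append_assoc, List.getElem?_append, if_neg (by omega),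
      List.getElem?_append, if_pos (by omega)]
    congr 1
    omega
  have q1 := hv j (by omega)
  have q2 := hv (L + j) (by omega)
  rw [e1] at q1
  rw [e2, show i + (L + j) = i + L + j by omega] at q2
  rw [q1] at q2
  exact Option.some_injective _ q2

lemma list_fin1_eq (a b : List (Fin 1)) (h : a.length = b.length) : a = b :=
  List.ext_getElem h (fun _ _ _ => Subsingleton.elim _ _)

lemma fin2_add_add_s12 : ∀ z d : Fin 2, z + d + d = z := by decide
lemma fin2_add_sub : ∀ a b : Fin 2, a + (b - a) = b := by decide
lemma fin2_ne : ∀ a b : Fin 2, a ≠ b → b = a + 1 := by decide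
lemma fin2_aa : ∀ a : Fin 2, a + 1 + 1 = a := by decide

lemma lower_bin (w : ℕ → Fin 2) :
    (∃ g : Fin 2 → Fin 2, (∀ z, g (g z) = z) ∧ ∃ u : List (Fin 2), u ≠ [] ∧
      FactorOf (u ++ u ++ u.map g) w) ∧
    (∃ g : Fin 2 → Fin 2, (∀ z, g (g z) = z) ∧ ∃ u : List (Fin 2), u ≠ [] ∧
      FactorOf (u ++ u ++ (u.map g).reverse) w) := by
  by_cases hsq : ∃ i, w i = w (i+1)
  · obtain ⟨i, hi⟩ := hsq
    set g : Fin 2 → Fin 2 := fun z => z + (w (i+2) - w i) with hg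
    have hinv : ∀ z, g (g z) = z := fun z => fin2_add_add_s12 z _
    have hmap : [w i].map g = [w (i+2)] := by
      simp [hg, fin2_add_sub]
    have hfac : FactorOf ([w i] ++ [w i] ++ [w (i+2)]) w := by
      refine ⟨i, ?_⟩
      simp [List.range_succ, ← hi]
    constructor
    · exact ⟨g, hinv, [w i], by simp, by rw [hmap]; exact hfac⟩
    · exact ⟨g, hinv, [w i], by simp, by rw [hmap]; exact hfac⟩
  · push_neg at hsq
    have hstep : ∀ n, w (n+1) = w n + 1 := fun n => fin2_ne _ _ (hsq n)
    have e : ∀ n, w (n+2) = w n := by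
      intro n
      show w (n+1+1) = w n
      rw [hstep (n+1), hstep n, fin2_aa]
    have e2 : w 2 = w 0 := by simpa using e 0
    have e3 : w 3 = w 1 := by simpa using e 1
    have e4 : w 4 = w 0 := by simpa [e2] using e 2
    have e5 : w 5 = w 1 := by simpa [e3] using e 3
    have hfac : FactorOf ([w 0, w 1] ++ [w 0, w 1] ++ [w 0, w 1]) w := by
      refine ⟨0, ?_⟩
      simp [List.range_succ, e2, e3, e4, e5]
    constructor
    · refine ⟨id, fun z => rfl, [w 0, w 1], by simp, ?_⟩
      simpa using hfac
    · refine ⟨fun z => z + 1, fun z => fin2_aa z, [w 0, w 1], by simp, ?_⟩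
      have hrev : (([w 0, w 1]).map (fun z => z + 1)).reverse = [w 0, w 1] := by
        show [w 1 + 1, w 0 + 1] = [w 0, w 1]
        rw [← hstep 0, ← hstep 1, e2]
      rw [hrev]
      exact hfac

/-- The morphic and antimorphic θ-avoidance indices of `α α θ(α)` are both
exactly `3`: `3` is the least `k` such that some infinite word over `Fin k`
has no factor `u ++ u ++ θ(u)` (`u` nonempty) for any morphic (resp.
antimorphic) involution `θ`. -/
theorem index_aa_ta_eq_three :
    IsLeast {k : ℕ | ∃ w : ℕ → Fin k,
      ∀ g : Fin k → Fin k, (∀ z, g (g z) = z) →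
        ∀ u : List (Fin k), u ≠ [] → ¬ FactorOf (u ++ u ++ u.map g) w} 3 ∧
    IsLeast {k : ℕ | ∃ w : ℕ → Fin k,
      ∀ g : Fin k → Fin k, (∀ z, g (g z) = z) →
        ∀ u : List (Fin k), u ≠ [] →
          ¬ FactorOf (u ++ u ++ (u.map g).reverse) w} 3 := by
  constructor
  · constructor
    · exact ⟨w3, fun g _ u hu => w3_avoid u (u.map g) hu⟩
    · intro k hk
      obtain ⟨w, hw⟩ := hk
      by_contra hlt
      push_neg at hlt
      interval_cases k
      · exact (w 0).elim0
      · apply hw id (fun z => rfl) [w 0] (by simp)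
        exact ⟨0, list_fin1_eq _ _ (by simp)⟩
      · obtain ⟨g, hg, u, hu, hf⟩ := (lower_bin w).1
        exact hw g hg u hu hf
  · constructor
    · exact ⟨w3, fun g _ u hu => w3_avoid u (u.map g).reverse hu⟩
    · intro k hk
      obtain ⟨w, hw⟩ := hk
      by_contra hlt
      push_neg at hlt
      interval_cases k
      · exact (w 0).elim0
      · apply hw id (fun z => rfl) [w 0] (by simp)
        exact ⟨0, list_fin1_eq _ _ (by simp)⟩
      · obtain ⟨g, hg, u, hu, hf⟩ := (lower_bin w).2
        exact hw g hg u hu hf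
end
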